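/- arXiv:math-ph/0202047 — 3 statements merged into one kernel-verified Lean document; each statement's English description precedes it below -/
import Mathlib

section
/- Let w(λ) = Σ_{k=0}^{N-1} ρ_k/(λ_k - λ) with λ_0 < ... < λ_{N-1} and ρ_k > 0. Then on each open interval (λ_{k-1}, λ_k), k = 1,...,N-1, the function w has exactly one zero γ_k; in particular w has exactly N-1 real zeros, and they interlace the poles: λ_0 < γ_1 < λ_1 < ... < λ_{N-2} < γ_{N-1} < λ_{N-1}. -/
open Finset Filter Set Topology

/-- If `b < a` and `a*b > 0` (same sign), then `ρ/a < ρ/b` for `ρ > 0`. -/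
lemma aux_div_lt (ρ a b : ℝ) (hρ : 0 < ρ) (hba : b < a) (hab : 0 < a * b) :
    ρ / a < ρ / b := by
  have ha : a ≠ 0 := by rintro rfl; simp at hab
  have hb : b ≠ 0 := by rintro rfl; simp at hab
  have h1 : ρ / b - ρ / a = ρ * (a - b) / (a * b) := by field_simp
  have h2 : 0 < ρ * (a - b) / (a * b) := div_pos (mul_pos hρ (by linarith)) hab
  linarith

/-- `c / (p - x) → -∞` as `x → p⁺`, for `c > 0`. -/
lemma aux_tendsto_atBot (c p : ℝ) (hc : 0 < c) :
    Tendsto (fun x : ℝ => c / (p - x)) (𝓝[>] p) atBot := by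
  have h1 : Tendsto (fun x : ℝ => x - p) (𝓝[>] p) (𝓝[>] 0) := by
    apply tendsto_nhdsWithin_of_tendsto_nhds_of_eventually_within
    · have : Tendsto (fun x : ℝ => x - p) (𝓝 p) (𝓝 (p - p)) :=
        (continuous_id.sub continuous_const).tendsto p
      simpa using this.mono_left nhdsWithin_le_nhds
    · filter_upwards [self_mem_nhdsWithin] with x hx
      simpa [Set.mem_Ioi, sub_pos] using hx
  have h2 : Tendsto (fun x : ℝ => (x - p)⁻¹) (𝓝[>] p) atTop :=
    tendsto_inv_nhdsGT_zero.comp h1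
  have h3 : Tendsto (fun x : ℝ => c * (x - p)⁻¹) (𝓝[>] p) atTop :=
    h2.const_mul_atTop hc
  have h4 : Tendsto (fun x : ℝ => -(c * (x - p)⁻¹)) (𝓝[>] p) atBot :=
    tendsto_neg_atTop_atBot.comp h3
  refine h4.congr' ?_
  filter_upwards [self_mem_nhdsWithin] with x hx
  have h5 : (p - x)⁻¹ = -((x - p)⁻¹) := by rw [← neg_sub x p, inv_neg]
  rw [div_eq_mul_inv, h5]
  ring

/-- `c / (p - x) → +∞` as `x → p⁻`, for `c > 0`. -/
lemma aux_tendsto_atTop (c p : ℝ) (hc : 0 < c) :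
    Tendsto (fun x : ℝ => c / (p - x)) (𝓝[<] p) atTop := by
  have h1 : Tendsto (fun x : ℝ => p - x) (𝓝[<] p) (𝓝[>] 0) := by
    apply tendsto_nhdsWithin_of_tendsto_nhds_of_eventually_within
    · have : Tendsto (fun x : ℝ => p - x) (𝓝 p) (𝓝 (p - p)) :=
        (continuous_const.sub continuous_id).tendsto p
      simpa using this.mono_left nhdsWithin_le_nhds
    · filter_upwards [self_mem_nhdsWithin] with x hx
      simpa [Set.mem_Ioi, sub_pos] using hx
  have h2 : Tendsto (fun x : ℝ => (p - x)⁻¹) (𝓝[<] p) atTop :=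
    tendsto_inv_nhdsGT_zero.comp h1
  have h3 : Tendsto (fun x : ℝ => c * (p - x)⁻¹) (𝓝[<] p) atTop :=
    h2.const_mul_atTop hc
  refine h3.congr ?_
  intro x
  rw [div_eq_mul_inv]

/-- w has exactly one zero γ_k in each interval (λ_{k-1}, λ_k),
k = 1,…,N-1, and these are all real zeros of w (off the poles), so the zeros
interlace the poles. -/
theorem stmt_1 (N : ℕ) (hN : 2 ≤ N) (l ρ : ℕ → ℝ)
    (hl : ∀ i j, i < j → j < N → l i < l j)
    (hρ : ∀ k, k < N → 0 < ρ k) :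
    (∀ k, 1 ≤ k → k ≤ N - 1 →
      ∃! γ : ℝ, γ ∈ Set.Ioo (l (k - 1)) (l k) ∧ ∑ j ∈ range N, ρ j / (l j - γ) = 0) ∧
    (∀ x : ℝ, (∀ j, j < N → x ≠ l j) → (∑ j ∈ range N, ρ j / (l j - x)) = 0 →
      ∃ k, 1 ≤ k ∧ k ≤ N - 1 ∧ x ∈ Set.Ioo (l (k - 1)) (l k)) := by
  set w : ℝ → ℝ := fun x => ∑ j ∈ range N, ρ j / (l j - x) with hw
  have hle : ∀ i j, i ≤ j → j < N → l i ≤ l j := by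
    intro i j hij hj
    rcases eq_or_lt_of_le hij with h | h
    · exact le_of_eq (by rw [h])
    · exact (hl i j h hj).le
  -- strict monotonicity on each interval between consecutive poles
  have hmono : ∀ k, 1 ≤ k → k ≤ N - 1 → ∀ x ∈ Set.Ioo (l (k-1)) (l k),
      ∀ y ∈ Set.Ioo (l (k-1)) (l k), x < y → w x < w y := by
    intro k hk1 hkN x hx y hy hxy
    have hkN' : k < N := by omega
    apply Finset.sum_lt_sum_of_nonempty (by simp; omega)
    intro j hj
    have hjN : j < N := Finset.mem_range.1 hj
    apply aux_div_lt _ _ _ (hρ j hjN) (by linarith)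
    rcases le_or_gt j (k-1) with h | h
    · have : l j ≤ l (k-1) := hle j (k-1) h (by omega)
      have h1 : l j - x < 0 := by linarith [hx.1]
      have h2 : l j - y < 0 := by linarith [hx.1]
      nlinarith
    · have : l k ≤ l j := hle k j (by omega) hjN
      have h1 : 0 < l j - x := by linarith [hx.2, hy.2]
      have h2 : 0 < l j - y := by linarith [hy.2]
      nlinarith
  -- continuity on the open interval
  have hcont : ∀ k, 1 ≤ k → k ≤ N - 1 → ContinuousOn w (Set.Ioo (l (k-1)) (l k)) := by
    intro k hk1 hkN
    apply continuousOn_finset_sum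
    intro j hj
    have hjN : j < N := Finset.mem_range.1 hj
    apply ContinuousOn.div continuousOn_const
      ((continuous_const.sub continuous_id).continuousOn)
    intro x hx
    simp only [Set.mem_Ioo] at hx
    intro hc
    rw [Pi.sub_apply, sub_eq_zero] at hc
    simp only [id_eq] at hc
    rcases le_or_gt j (k-1) with h | h
    · have : l j ≤ l (k-1) := hle j (k-1) h (by omega)
      linarith [hx.1]
    · have : l k ≤ l j := hle k j (by omega) hjN
      linarith [hx.2]
  constructor
  · -- existence and uniqueness of the zero in each interval
    intro k hk1 hkN
    have hkN' : k < N := by omega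
    have hk1N : k - 1 < N := by omega
    have hab : l (k-1) < l k := hl (k-1) k (by omega) hkN'
    set a := l (k-1) with ha
    set b := l k with hb
    -- w tends to -∞ at a⁺
    have htB : Tendsto w (𝓝[>] a) atBot := by
      have hsplit : ∀ x : ℝ, w x = ρ (k-1) / (l (k-1) - x) +
          ∑ j ∈ (range N).erase (k-1), ρ j / (l j - x) := by
        intro x
        rw [hw]
        exact (Finset.add_sum_erase _ _ (Finset.mem_range.2 hk1N)).symm
      have h1 : Tendsto (fun x : ℝ => ρ (k-1) / (l (k-1) - x)) (𝓝[>] a) atBot :=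
        aux_tendsto_atBot _ _ (hρ _ hk1N)
      have h2 : Tendsto (fun x : ℝ => ∑ j ∈ (range N).erase (k-1), ρ j / (l j - x))
          (𝓝[>] a) (𝓝 (∑ j ∈ (range N).erase (k-1), ρ j / (l j - a))) := by
        apply tendsto_finset_sum
        intro j hj
        have hjN : j < N := Finset.mem_range.1 (Finset.mem_of_mem_erase hj)
        have hjk : j ≠ k - 1 := Finset.ne_of_mem_erase hj
        have hne : l j - a ≠ 0 := by
          rw [sub_ne_zero, ha]
          rcases lt_or_gt_of_ne hjk with h | h
          · exact ne_of_lt (hl j (k-1) h (by omega))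
          · exact ne_of_gt (hl (k-1) j h hjN)
        have := (tendsto_const_nhds.div
          ((continuous_const.sub continuous_id).tendsto a) hne :
          Tendsto (fun x : ℝ => ρ j / (l j - x)) (𝓝 a) _)
        exact this.mono_left nhdsWithin_le_nhds
      have := h1.atBot_add h2
      refine this.congr fun x => (hsplit x).symm
    -- w tends to +∞ at b⁻
    have htT : Tendsto w (𝓝[<] b) atTop := by
      have hsplit : ∀ x : ℝ, w x = ρ k / (l k - x) +
          ∑ j ∈ (range N).erase k, ρ j / (l j - x) := by
        intro x
        rw [hw]
        exact (Finset.add_sum_erase _ _ (Finset.mem_range.2 hkN')).symm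
      have h1 : Tendsto (fun x : ℝ => ρ k / (l k - x)) (𝓝[<] b) atTop :=
        aux_tendsto_atTop _ _ (hρ _ hkN')
      have h2 : Tendsto (fun x : ℝ => ∑ j ∈ (range N).erase k, ρ j / (l j - x))
          (𝓝[<] b) (𝓝 (∑ j ∈ (range N).erase k, ρ j / (l j - b))) := by
        apply tendsto_finset_sum
        intro j hj
        have hjN : j < N := Finset.mem_range.1 (Finset.mem_of_mem_erase hj)
        have hjk : j ≠ k := Finset.ne_of_mem_erase hj
        have hne : l j - b ≠ 0 := by
          rw [sub_ne_zero, hb]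
          rcases lt_or_gt_of_ne hjk with h | h
          · exact ne_of_lt (hl j k h hkN')
          · exact ne_of_gt (hl k j h hjN)
        have := (tendsto_const_nhds.div
          ((continuous_const.sub continuous_id).tendsto b) hne :
          Tendsto (fun x : ℝ => ρ j / (l j - x)) (𝓝 b) _)
        exact this.mono_left nhdsWithin_le_nhds
      have := h1.atTop_add h2
      refine this.congr fun x => (hsplit x).symm
    -- find a point with negative value
    obtain ⟨x₁, hx₁I, hx₁neg⟩ : ∃ x, x ∈ Set.Ioo a b ∧ w x < 0 := by
      have h1 : ∀ᶠ x in 𝓝[>] a, w x < 0 := htB.eventually (eventually_lt_atBot 0)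
      have h2 : ∀ᶠ x in 𝓝[>] a, x < b :=
        eventually_nhdsWithin_of_eventually_nhds (Filter.Tendsto.eventually_lt_const hab tendsto_id)
      have h3 : ∀ᶠ x in 𝓝[>] a, x ∈ Set.Ioi a := self_mem_nhdsWithin
      obtain ⟨x, hx1, hx2, hx3⟩ := (h1.and (h2.and h3)).exists
      exact ⟨x, ⟨hx3, hx2⟩, hx1⟩
    obtain ⟨x₂, hx₂I, hx₂pos⟩ : ∃ x, x ∈ Set.Ioo a b ∧ 0 < w x := by
      have h1 : ∀ᶠ x in 𝓝[<] b, 0 < w x := htT.eventually (eventually_gt_atTop 0)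
      have h2 : ∀ᶠ x in 𝓝[<] b, a < x :=
        eventually_nhdsWithin_of_eventually_nhds (Filter.Tendsto.eventually_const_lt hab tendsto_id)
      have h3 : ∀ᶠ x in 𝓝[<] b, x ∈ Set.Iio b := self_mem_nhdsWithin
      obtain ⟨x, hx1, hx2, hx3⟩ := (h1.and (h2.and h3)).exists
      exact ⟨x, ⟨hx2, hx3⟩, hx1⟩
    have hx12 : x₁ < x₂ := by
      by_contra h
      push_neg at h
      rcases eq_or_lt_of_le h with h | h
      · rw [h] at hx₂pos; linarith
      · linarith [hmono k hk1 hkN x₂ hx₂I x₁ hx₁I h]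
    -- IVT
    have hIcc : Set.Icc x₁ x₂ ⊆ Set.Ioo a b := fun t ht =>
      ⟨lt_of_lt_of_le hx₁I.1 ht.1, lt_of_le_of_lt ht.2 hx₂I.2⟩
    obtain ⟨γ, hγmem, hγ0⟩ : ∃ γ ∈ Set.Icc x₁ x₂, w γ = 0 := by
      have := intermediate_value_Icc hx12.le ((hcont k hk1 hkN).mono hIcc)
      have h0 : (0:ℝ) ∈ Set.Icc (w x₁) (w x₂) := ⟨hx₁neg.le, hx₂pos.le⟩
      obtain ⟨γ, hγ, hγ0⟩ := this h0
      exact ⟨γ, hγ, hγ0⟩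
    refine ⟨γ, ⟨hIcc hγmem, hγ0⟩, ?_⟩
    rintro γ' ⟨hγ'I, hγ'0⟩
    have hγ'0' : w γ' = 0 := hγ'0
    by_contra hne
    rcases lt_or_gt_of_ne hne with h | h
    · have := hmono k hk1 hkN γ' hγ'I γ (hIcc hγmem) h
      rw [hγ0, hγ'0'] at this; exact lt_irrefl _ this
    · have := hmono k hk1 hkN γ (hIcc hγmem) γ' hγ'I h
      rw [hγ0, hγ'0'] at this; exact lt_irrefl _ this
  · -- every zero lies in some interval between consecutive poles
    intro x hx hx0
    have hN1 : N - 1 < N := by omega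
    have hrne : (range N).Nonempty := ⟨0, Finset.mem_range.2 (by omega)⟩
    -- x is not left of all poles
    have hl0 : l 0 < x := by
      rcases lt_trichotomy x (l 0) with h | h | h
      · exfalso
        have : 0 < w x := by
          apply Finset.sum_pos _ hrne
          intro j hj
          have hjN : j < N := Finset.mem_range.1 hj
          have : l 0 ≤ l j := hle 0 j (by omega) hjN
          exact div_pos (hρ j hjN) (by linarith)
        rw [hw] at this; linarith [hx0 ▸ this]
      · exact absurd h (hx 0 (by omega))
      · exact h
    have hlN : x < l (N-1) := by
      rcases lt_trichotomy x (l (N-1)) with h | h | h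
      · exact h
      · exact absurd h (hx (N-1) hN1)
      · exfalso
        have : w x < 0 := by
          refine Finset.sum_neg (fun j hj => ?_) hrne
          have hjN : j < N := Finset.mem_range.1 hj
          have : l j ≤ l (N-1) := hle j (N-1) (by omega) hN1
          apply div_neg_of_pos_of_neg (hρ j hjN)
          linarith
        rw [hw] at this; linarith [hx0 ▸ this]
    -- take the least k with x < l k
    have hP : ∃ k, x < l k ∧ k < N := ⟨N-1, hlN, hN1⟩
    classical
    obtain ⟨hxk, hkN'⟩ := Nat.find_spec hP
    have hk1 : 1 ≤ Nat.find hP := by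
      rcases Nat.eq_zero_or_pos (Nat.find hP) with h | h
      · exfalso
        have h0 : x < l 0 := by rw [← h]; exact hxk
        linarith
      · exact h
    have hkle : Nat.find hP ≤ N - 1 := by
      have := Nat.find_min' hP ⟨hlN, hN1⟩
      omega
    have hnotk1 : ¬ (x < l (Nat.find hP - 1) ∧ Nat.find hP - 1 < N) :=
      Nat.find_min hP (by omega)
    have hlk1 : l (Nat.find hP - 1) ≤ x := by
      by_contra h
      push_neg at h
      exact hnotk1 ⟨h, by omega⟩
    have hlk1' : l (Nat.find hP - 1) < x :=
      lt_of_le_of_ne hlk1 (fun h => (hx _ (by omega)) h.symm)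
    exact ⟨Nat.find hP, hk1, hkle, hlk1', hxk⟩
end

section
/- The map from divisors to matrices' spectral data is injective in the following sense: fixing λ_0 < ... < λ_{N-1}, the map sending (γ_1,...,γ_{N-1}) with λ_{k-1} < γ_k < λ_k to the weights (ρ_0,...,ρ_{N-1}), ρ_n = ∏_s(λ_n - γ_s)/∏_{m≠n}(λ_n - λ_m), is injective: distinct interlacing divisor sequences yield distinct weight vectors. -/
open Finset Polynomial

/-- fixing the spectrum λ_0 < … < λ_{N-1}, the map from interlacing
divisors (γ_1,…,γ_{N-1}) to weights ρ_n = ∏_s(λ_n - γ_s)/∏_{m≠n}(λ_n - λ_m)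
is injective. -/
theorem stmt_9 (N : ℕ) (hN : 2 ≤ N) (l g g' : ℕ → ℝ)
    (hl : ∀ i j, i < j → j < N → l i < l j)
    (hint : ∀ k, 1 ≤ k → k ≤ N - 1 → l (k - 1) < g k ∧ g k < l k)
    (hint' : ∀ k, 1 ≤ k → k ≤ N - 1 → l (k - 1) < g' k ∧ g' k < l k)
    (hρ : ∀ n, n < N →
      (∏ s ∈ Icc 1 (N - 1), (l n - g s)) / ∏ m ∈ (range N).erase n, (l n - l m) =
      (∏ s ∈ Icc 1 (N - 1), (l n - g' s)) / ∏ m ∈ (range N).erase n, (l n - l m)) :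
    ∀ k, 1 ≤ k → k ≤ N - 1 → g k = g' k := by
  -- l is injective on range N
  have hlinj : Set.InjOn l (range N : Finset ℕ) := by
    intro i hi j hj hij
    simp only [coe_range, Set.mem_Iio] at hi hj
    by_contra hne
    rcases lt_or_gt_of_ne hne with h | h
    · exact (hl i j h hj).ne hij
    · exact (hl j i h hi).ne hij.symm
  -- numerators agree
  have hnum : ∀ n, n < N →
      (∏ s ∈ Icc 1 (N - 1), (l n - g s)) = ∏ s ∈ Icc 1 (N - 1), (l n - g' s) := by
    intro n hn
    have hd : (∏ m ∈ (range N).erase n, (l n - l m)) ≠ 0 := by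
      rw [Finset.prod_ne_zero_iff]
      intro m hm
      rcases Finset.mem_erase.mp hm with ⟨hmn, hmN⟩
      rw [Finset.mem_range] at hmN
      rcases lt_or_gt_of_ne hmn with h | h
      · exact sub_ne_zero.mpr (hl m n h hn).ne'
      · exact sub_ne_zero.mpr (hl n m h hmN).ne
    have := hρ n hn
    field_simp at this
    exact this
  -- the two polynomials ∏ (X - γ) agree
  set q : ℝ[X] := ∏ s ∈ Icc 1 (N - 1), (X - C (g s)) with hq
  set q' : ℝ[X] := ∏ s ∈ Icc 1 (N - 1), (X - C (g' s)) with hq'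
  have hcard : #(Icc 1 (N - 1)) = N - 1 := by
    rw [Nat.card_Icc]; omega
  have hdeg : (q - q').natDegree < N := by
    have h1 : q.natDegree ≤ N - 1 := by
      refine le_trans (natDegree_prod_le _ _) (le_of_eq ?_)
      rw [Finset.sum_congr rfl (fun s _ => natDegree_X_sub_C (g s))]
      simp [hcard]
    have h2 : q'.natDegree ≤ N - 1 := by
      refine le_trans (natDegree_prod_le _ _) (le_of_eq ?_)
      rw [Finset.sum_congr rfl (fun s _ => natDegree_X_sub_C (g' s))]
      simp [hcard]
    have := natDegree_sub_le_of_le h1 h2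
    simp only [max_self] at this
    exact lt_of_le_of_lt this (by omega)
  have hqq : q = q' := by
    have hzero : q - q' = 0 := by
      apply eq_zero_of_natDegree_lt_card_of_eval_eq_zero' _ ((range N).image l)
      · intro x hx
        rcases Finset.mem_image.mp hx with ⟨n, hn, rfl⟩
        rw [Finset.mem_range] at hn
        simp only [eval_sub, hq, hq', eval_prod, eval_sub, eval_X, eval_C]
        rw [hnum n hn]
        ring
      · rwa [Finset.card_image_of_injOn hlinj, card_range]
    exact sub_eq_zero.mp hzero
  -- now extract roots
  intro k hk1 hk2
  have hkmem : k ∈ Icc 1 (N - 1) := Finset.mem_Icc.mpr ⟨hk1, hk2⟩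
  have heval : q'.eval (g k) = 0 := by
    rw [← hqq, hq, eval_prod]
    apply Finset.prod_eq_zero hkmem
    simp
  rw [hq', eval_prod] at heval
  obtain ⟨s, hs, hs0⟩ := Finset.prod_eq_zero_iff.mp heval
  simp only [eval_sub, eval_X, eval_C, sub_eq_zero] at hs0
  rcases Finset.mem_Icc.mp hs with ⟨hs1, hs2⟩
  -- show s = k using interlacing
  rcases lt_trichotomy s k with h | h | h
  · exfalso
    have h1 : g' s < l s := (hint' s hs1 hs2).2
    have h2 : l (k - 1) < g k := (hint k hk1 hk2).1
    have h3 : l s ≤ l (k - 1) := by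
      rcases eq_or_lt_of_le (by omega : s ≤ k - 1) with h' | h'
      · rw [h']
      · exact le_of_lt (hl s (k - 1) h' (by omega))
    linarith [hs0 ▸ (h1.trans_le h3).trans h2]
  · rw [hs0, h]
  · exfalso
    have h1 : g k < l k := (hint k hk1 hk2).2
    have h2 : l (s - 1) < g' s := (hint' s hs1 hs2).1
    have h3 : l k ≤ l (s - 1) := by
      rcases eq_or_lt_of_le (by omega : k ≤ s - 1) with h' | h'
      · rw [h']
      · exact le_of_lt (hl k (s - 1) h' (by omega))
    linarith [hs0 ▸ (h1.trans_le h3).trans h2]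
end

section
/- Define the formal bracket on pairs of values of a function w by {w(λ), w(μ)} = (w(λ) - w(μ))²/(λ - μ). For a rational function w(λ) = Σ_k ρ_k/(λ_k - λ) with distinct poles, this bracket, expressed via the coordinates (ρ_k, λ_k) with Poisson relations {ρ_k, ρ_n} = 2ρ_k ρ_n/(λ_n - λ_k) for k ≠ n, {ρ_k, λ_n} = ρ_k δ_k^n, {λ_k, λ_n} = 0, reproduces the Atiyah–Hitchin formula: i.e., if one computes {w(λ), w(μ)} by bilinearity and Leibniz from these coordinate brackets, the result equals (w(λ)-w(μ))²/(λ-μ) for all λ, μ off the poles. -/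
open Finset

/-- the coordinate brackets {ρ_k,ρ_n} = 2ρ_kρ_n/(λ_n-λ_k) (k≠n),
{ρ_k,λ_n} = ρ_k δ_k^n, {λ_k,λ_n} = 0, combined by bilinearity/Leibniz through the
partial derivatives ∂w(λ)/∂ρ_k = 1/(λ_k-λ), ∂w(λ)/∂λ_n = -ρ_n/(λ_n-λ)²,
reproduce the Atiyah–Hitchin formula {w(λ),w(μ)} = (w(λ)-w(μ))²/(λ-μ). -/
theorem stmt_11 (N : ℕ) (hN : 1 ≤ N) (l ρ : ℕ → ℝ)
    (hl : ∀ i j, i < N → j < N → i ≠ j → l i ≠ l j)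
    (hρ : ∀ k, k < N → ρ k ≠ 0)
    (x y : ℝ) (hxy : x ≠ y)
    (hx : ∀ k, k < N → x ≠ l k) (hy : ∀ k, k < N → y ≠ l k) :
    (∑ k ∈ range N, ∑ n ∈ range N,
        ((1 / (l k - x)) * (-(ρ n) / (l n - y) ^ 2) -
         (1 / (l k - y)) * (-(ρ n) / (l n - x) ^ 2)) *
          (if k = n then ρ k else 0))
    + (∑ k ∈ range N, ∑ n ∈ range N,
        if k ≠ n then
          (1 / (l k - x)) * (1 / (l n - y)) * (2 * ρ k * ρ n / (l n - l k))
        else 0)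
    = ((∑ k ∈ range N, ρ k / (l k - x)) - (∑ k ∈ range N, ρ k / (l k - y))) ^ 2 /
        (x - y) := by
  have hxy' : x - y ≠ 0 := sub_ne_zero.mpr hxy
  have ha : ∀ k ∈ range N, l k - x ≠ 0 := fun k hk =>
    sub_ne_zero.mpr fun h => hx k (mem_range.mp hk) h.symm
  have hb : ∀ k ∈ range N, l k - y ≠ 0 := fun k hk =>
    sub_ne_zero.mpr fun h => hy k (mem_range.mp hk) h.symm
  set t : ℕ → ℝ := fun k => ρ k / ((l k - x) * (l k - y)) with ht
  have hdiff : (∑ k ∈ range N, ρ k / (l k - x)) - (∑ k ∈ range N, ρ k / (l k - y))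
      = (x - y) * ∑ k ∈ range N, t k := by
    rw [← Finset.sum_sub_distrib, Finset.mul_sum]
    refine Finset.sum_congr rfl fun k hk => ?_
    have h1 := ha k hk; have h2 := hb k hk
    simp only [ht]
    field_simp
    ring
  rw [hdiff]
  have hRHS : ((x - y) * ∑ k ∈ range N, t k) ^ 2 / (x - y)
      = ∑ k ∈ range N, ∑ n ∈ range N, (x - y) * (t k * t n) := by
    calc ((x - y) * ∑ k ∈ range N, t k) ^ 2 / (x - y)
        = (x - y) * ((∑ k ∈ range N, t k) * (∑ k ∈ range N, t k)) := by
          field_simp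
      _ = (x - y) * (∑ k ∈ range N, ∑ n ∈ range N, t k * t n) := by
          rw [Finset.sum_mul_sum]
      _ = ∑ k ∈ range N, ∑ n ∈ range N, (x - y) * (t k * t n) := by
          simp only [Finset.mul_sum]
  rw [hRHS]
  have hsplit : ∑ k ∈ range N, ∑ n ∈ range N, (x - y) * (t k * t n)
      = (∑ k ∈ range N, ∑ n ∈ range N, (if k = n then (x - y) * (t k * t n) else 0))
      + (∑ k ∈ range N, ∑ n ∈ range N, (if k ≠ n then (x - y) * (t k * t n) else 0)) := by
    rw [← Finset.sum_add_distrib]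
    refine Finset.sum_congr rfl fun k _ => ?_
    rw [← Finset.sum_add_distrib]
    refine Finset.sum_congr rfl fun n _ => ?_
    by_cases h : k = n <;> simp [h]
  rw [hsplit]
  congr 1
  · -- diagonal part
    refine Finset.sum_congr rfl fun k hk => Finset.sum_congr rfl fun n hn => ?_
    by_cases h : k = n
    · subst h
      simp only [if_pos rfl, ↓reduceIte]
      have h1 := ha k hk; have h2 := hb k hk
      simp only [ht]
      field_simp
      ring
    · simp [h]
  · -- off-diagonal part
    have key : ∀ k ∈ range N, ∀ n ∈ range N,
        (if k ≠ n then (1 / (l k - x)) * (1 / (l n - y)) * (2 * ρ k * ρ n / (l n - l k)) else 0)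
        + (if n ≠ k then (1 / (l n - x)) * (1 / (l k - y)) * (2 * ρ n * ρ k / (l k - l n)) else 0)
        = (if k ≠ n then (x - y) * (t k * t n) else 0)
        + (if n ≠ k then (x - y) * (t n * t k) else 0) := by
      intro k hk n hn
      by_cases h : k = n
      · simp [h]
      · have h' : n ≠ k := fun hh => h hh.symm
        simp only [if_pos h, if_pos h', ht]
        have h1 := ha k hk; have h2 := hb k hk
        have h3 := ha n hn; have h4 := hb n hn
        have h5 : l n - l k ≠ 0 := sub_ne_zero.mpr
          (hl n k (mem_range.mp hn) (mem_range.mp hk) h')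
        have h6 : l k - l n ≠ 0 := sub_ne_zero.mpr
          (hl k n (mem_range.mp hk) (mem_range.mp hn) h)
        field_simp
        ring
    have two_eq : (2 : ℝ) * (∑ k ∈ range N, ∑ n ∈ range N,
          if k ≠ n then (1 / (l k - x)) * (1 / (l n - y)) * (2 * ρ k * ρ n / (l n - l k)) else 0)
        = 2 * (∑ k ∈ range N, ∑ n ∈ range N, if k ≠ n then (x - y) * (t k * t n) else 0) := by
      have e1 : ∀ (F : ℕ → ℕ → ℝ),
          (2 : ℝ) * (∑ k ∈ range N, ∑ n ∈ range N, F k n)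
          = ∑ k ∈ range N, ∑ n ∈ range N, (F k n + F n k) := by
        intro F
        simp only [Finset.sum_add_distrib]
        rw [two_mul]
        congr 1
        exact Finset.sum_comm
      rw [e1, e1]
      refine Finset.sum_congr rfl fun k hk => Finset.sum_congr rfl fun n hn => ?_
      exact key k hk n hn
    exact mul_left_cancel₀ (two_ne_zero) two_eq
end
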